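/- Let p be a nonzero homogeneous polynomial in d variables with real coefficients that is hyperbolic in direction u ∈ ℝ^d. Fix x ∈ ℝ^d with p(x) = 0, write p(x + y) = Σ_{j ≥ k} q_j(y) where each q_j is homogeneous of degree j in y and q_k is the nonzero homogeneous component of lowest degree (the localization of p at x). Then q_k is hyperbolic in direction u. -/

import Mathlib

open Complex MvPolynomial Metric Set Finset Filter Topology

noncomputable section
namespace Stmt4Aux

variable {d : ℕ}

lemma continuous_maeval (p : MvPolynomial (Fin d) ℝ) :
    Continuous fun z : Fin d → ℂ => aeval z p := by
  induction p using MvPolynomial.induction_on with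
  | C a => simpa using continuous_const
  | add p q hp hq =>
      simp only [map_add]; exact hp.add hq
  | mul_X p i hp =>
      simp only [map_mul, aeval_X]; exact hp.mul (continuous_apply i)

lemma maeval_conj (p : MvPolynomial (Fin d) ℝ) (z : Fin d → ℂ) :
    (starRingEnd ℂ) (aeval z p) = aeval (fun i => (starRingEnd ℂ) (z i)) p := by
  have h := comp_aeval_apply (R := ℝ) (Complex.conjAe.toAlgHom) p (f := z)
  simpa using h

lemma maeval_ofReal (p : MvPolynomial (Fin d) ℝ) (w : Fin d → ℝ) :
    aeval (fun i => (w i : ℂ)) p = ((eval w p : ℝ) : ℂ) := by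
  have h := comp_aeval_apply (R := ℝ) (Algebra.ofId ℝ ℂ) p (f := w)
  have e : (aeval w p : ℝ) = eval w p := by
    rw [← MvPolynomial.coe_aeval_eq_eval]; rfl
  rw [← e]
  simp only [Algebra.ofId_apply, Complex.coe_algebraMap] at h
  exact h.symm

lemma maeval_scal {p : MvPolynomial (Fin d) ℝ} {n : ℕ} (h : p.IsHomogeneous n)
    (t : ℂ) (z : Fin d → ℂ) :
    aeval (fun i => t * z i) p = t ^ n * aeval z p := by
  rw [aeval_def, aeval_def, eval₂_eq, eval₂_eq, Finset.mul_sum]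
  refine Finset.sum_congr rfl fun s hs => ?_
  have hdeg : ∑ i ∈ s.support, s i = n := by
    have h2 := h (mem_support_iff.mp hs)
    rw [Finsupp.weight_apply] at h2
    simpa [Finsupp.sum] using h2
  have : ∏ i ∈ s.support, (t * z i) ^ s i
      = t ^ n * ∏ i ∈ s.support, (z i) ^ s i := by
    simp_rw [mul_pow]
    rw [Finset.prod_mul_distrib, Finset.prod_pow_eq_pow_sum, hdeg]
  rw [this]; ring

section MinMod

lemma minmod {f : ℂ → ℂ} (hf : Differentiable ℂ f) {c : ℂ} {r ε : ℝ} (hr : 0 < r)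
    (hne : ∀ z ∈ closedBall c r, f z ≠ 0)
    (hε : 0 < ε) (hmin : ∀ z ∈ sphere c r, ε ≤ ‖f z‖) : ε ≤ ‖f c‖ := by
  have hcb : closure (ball c r) = closedBall c r := closure_ball c hr.ne'
  have hfr : frontier (ball c r) = sphere c r := frontier_ball c hr.ne'
  have hd : DiffContOnCl ℂ (fun z => (f z)⁻¹) (ball c r) := by
    refine ⟨(hf.differentiableOn).inv fun z hz => hne z (ball_subset_closedBall hz), ?_⟩
    rw [hcb]
    exact (hf.continuous.continuousOn).inv₀ hne
  have hb : ∀ z ∈ frontier (ball c r), ‖(f z)⁻¹‖ ≤ ε⁻¹ := by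
    rw [hfr]
    intro z hz
    rw [norm_inv]
    exact inv_anti₀ hε (hmin z hz)
  have hc : c ∈ closure (ball c r) := by rw [hcb]; exact mem_closedBall_self hr.le
  have hle := Complex.norm_le_of_forall_mem_frontier_norm_le isBounded_ball hd hb hc
  rw [norm_inv] at hle
  have hfc : 0 < ‖f c‖ :=
    norm_pos_iff.mpr (hne c (mem_closedBall_self hr.le))
  calc ε = ε⁻¹⁻¹ := by rw [inv_inv]
  _ ≤ ‖f c‖⁻¹⁻¹ := by
      apply inv_anti₀
      · positivity
      · exact hle
  _ = ‖f c‖ := by rw [inv_inv]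

end MinMod

lemma mv_to_poly_eval (p : MvPolynomial (Fin d) ℝ) (g0 g1 : Fin d → ℂ) (T : ℂ) :
    (aeval (fun i => Polynomial.C (g0 i) + Polynomial.X * Polynomial.C (g1 i)) p
        : Polynomial ℂ).eval T
      = aeval (fun i => g0 i + T * g1 i) p := by
  have h := comp_aeval_apply (R := ℝ)
    ((Polynomial.aeval T : Polynomial ℂ →ₐ[ℂ] ℂ).restrictScalars ℝ) p
    (f := fun i => Polynomial.C (g0 i) + Polynomial.X * Polynomial.C (g1 i))
  simp only [AlgHom.coe_restrictScalars', map_add, map_mul, Polynomial.aeval_C,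
    Polynomial.aeval_X, Algebra.algebraMap_self, RingHom.id_apply] at h
  rw [← h]
  rw [← Polynomial.coe_aeval_eq_eval]

lemma norm_coe (w : Fin d → ℝ) : ‖(fun i => (w i : ℂ))‖ = ‖w‖ := by
  simp [Pi.norm_def]

lemma dist_coe (w v : Fin d → ℝ) :
    dist (fun i => (w i : ℂ)) (fun i => (v i : ℂ)) = ‖w - v‖ := by
  rw [dist_eq_norm]
  have : (fun i => (w i : ℂ)) - (fun i => (v i : ℂ)) = fun i => ((w i - v i : ℝ) : ℂ) := by
    funext i; push_cast [Pi.sub_apply]; ring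
  rw [this, norm_coe]
  rfl

lemma hyp_flip (p : MvPolynomial (Fin d) ℝ) {m : ℕ} (hp : p.IsHomogeneous m) (u : Fin d → ℝ)
    (hyp : ∀ y : Fin d → ℝ, aeval (fun j => (u j : ℂ) + Complex.I * (y j : ℂ)) p ≠ 0)
    (a : Fin d → ℝ) : aeval (fun i => (a i : ℂ) + Complex.I * (u i : ℂ)) p ≠ 0 := by
  have h := maeval_scal hp Complex.I (fun i => (u i : ℂ) + Complex.I * (((-a) i : ℝ) : ℂ))
  have e : (fun i => Complex.I * ((u i : ℂ) + Complex.I * (((-a) i : ℝ) : ℂ)))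
      = fun i => (a i : ℂ) + Complex.I * (u i : ℂ) := by
    funext i
    simp only [Pi.neg_apply]
    push_cast
    linear_combination (-(a i : ℂ)) * Complex.I_sq
  rw [e] at h
  rw [h]
  exact mul_ne_zero (pow_ne_zero _ Complex.I_ne_zero) (hyp (-a))

lemma step0 (p : MvPolynomial (Fin d) ℝ) {m : ℕ} (hp : p.IsHomogeneous m) (u : Fin d → ℝ)
    (hyp : ∀ y : Fin d → ℝ, aeval (fun j => (u j : ℂ) + Complex.I * (y j : ℂ)) p ≠ 0)
    {c : ℝ} (hc : c ≠ 0) (a : Fin d → ℝ) :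
    aeval (fun i => (a i : ℂ) + Complex.I * (c : ℂ) * (u i : ℂ)) p ≠ 0 := by
  have main : ∀ c' : ℝ, 0 < c' → ∀ a' : Fin d → ℝ,
      aeval (fun i => (a' i : ℂ) + Complex.I * (c' : ℂ) * (u i : ℂ)) p ≠ 0 := by
    intro c' hc' a'
    have h := maeval_scal hp (c' : ℂ) (fun i => ((a' i / c' : ℝ) : ℂ) + Complex.I * (u i : ℂ))
    have e : (fun i => (c' : ℂ) * (((a' i / c' : ℝ) : ℂ) + Complex.I * (u i : ℂ)))
        = fun i => (a' i : ℂ) + Complex.I * (c' : ℂ) * (u i : ℂ) := by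
      funext i
      have hc0 : (c' : ℂ) ≠ 0 := by exact_mod_cast hc'.ne'
      push_cast
      field_simp
    rw [e] at h
    rw [h]
    exact mul_ne_zero (pow_ne_zero _ (by exact_mod_cast hc'.ne'))
      (hyp_flip p hp u hyp (fun i => a' i / c'))
  rcases hc.lt_or_gt with hneg | hpos
  · have h := main (-c) (by linarith) a
    intro hzero
    apply h
    have hconj := maeval_conj p (fun i => (a i : ℂ) + Complex.I * (c : ℂ) * (u i : ℂ))
    rw [hzero, map_zero] at hconj
    have e : (fun i => (starRingEnd ℂ) ((a i : ℂ) + Complex.I * (c : ℂ) * (u i : ℂ)))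
        = fun i => (a i : ℂ) + Complex.I * ((-c : ℝ) : ℂ) * (u i : ℂ) := by
      funext i
      simp only [map_add, map_mul, Complex.conj_ofReal, Complex.conj_I]
      push_cast
      ring
    rw [e] at hconj
    exact hconj.symm
  · exact main c hpos a

lemma exists_eta (p : MvPolynomial (Fin d) ℝ) (u : Fin d → ℝ)
    (hpu : aeval (fun i => (u i : ℂ)) p ≠ 0) :
    ∃ η > 0, ∀ z : Fin d → ℂ, dist z (fun i => (u i : ℂ)) ≤ η → aeval z p ≠ 0 := by
  have hopen : IsOpen {z : Fin d → ℂ | aeval z p ≠ 0} := by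
    have : {z : Fin d → ℂ | aeval z p ≠ 0}
        = (fun z : Fin d → ℂ => aeval z p) ⁻¹' ({0}ᶜ) := rfl
    rw [this]
    exact (isOpen_compl_singleton).preimage (continuous_maeval p)
  rcases Metric.isOpen_iff.mp hopen _ hpu with ⟨ε, hε, hball⟩
  exact ⟨ε / 2, by positivity, fun z hz => hball (lt_of_le_of_lt hz (by linarith))⟩

set_option maxHeartbeats 1000000 in
lemma ballHyp (p : MvPolynomial (Fin d) ℝ) {m : ℕ} (hp : p.IsHomogeneous m) (u : Fin d → ℝ)
    (hyp : ∀ y : Fin d → ℝ, aeval (fun j => (u j : ℂ) + Complex.I * (y j : ℂ)) p ≠ 0) :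
    ∃ η > 0, ∀ b : Fin d → ℝ, ‖b - u‖ ≤ η → ∀ (a : Fin d → ℝ), ∀ (c : ℝ), c ≠ 0 →
      aeval (fun i => (a i : ℂ) + Complex.I * (c : ℂ) * (b i : ℂ)) p ≠ 0 := by
  have hpu : aeval (fun i => (u i : ℂ)) p ≠ 0 := by
    have h := hyp 0
    simpa using h
  obtain ⟨ηt, hηt, hball⟩ := exists_eta p u hpu
  refine ⟨ηt / 2, by positivity, ?_⟩
  intro b hb a
  -- the two families of polynomials
  set bseg : ℝ → Fin d → ℝ := fun r i => u i + r * (b i - u i) with hbseg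
  set Gp : ℝ → ℝ → Polynomial ℂ := fun ε r =>
    aeval (fun i => Polynomial.C ((a i : ℂ) + Complex.I * (ε : ℂ) * (u i : ℂ))
      + Polynomial.X * Polynomial.C ((bseg r i : ℂ))) p with hGp
  have hGeval : ∀ ε r : ℝ, ∀ T : ℂ, (Gp ε r).eval T
      = aeval (fun i => ((a i : ℂ) + Complex.I * (ε : ℂ) * (u i : ℂ))
          + T * (bseg r i : ℂ)) p := fun ε r T => mv_to_poly_eval p _ _ T
  have hsegdist : ∀ r : ℝ, r ∈ Icc (0:ℝ) 1 → ‖bseg r - u‖ ≤ ηt / 2 := by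
    intro r hr
    have e : bseg r - u = r • (b - u) := by
      funext i
      simp [hbseg, smul_eq_mul]
      try ring
    rw [e, norm_smul]
    have h1 : ‖r‖ ≤ 1 := by
      rw [Real.norm_eq_abs, abs_le]; exact ⟨by linarith [hr.1], hr.2⟩
    calc ‖r‖ * ‖b - u‖ ≤ 1 * (ηt / 2) :=
          mul_le_mul h1 hb (norm_nonneg _) zero_le_one
      _ = ηt / 2 := one_mul _
  have hF3 : ∀ ε : ℝ, ε ≠ 0 → ∀ r t : ℝ, (Gp ε r).eval (t : ℂ) ≠ 0 := by
    intro ε hε r t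
    rw [hGeval]
    have h := step0 p hp u hyp hε (fun i => a i + t * bseg r i)
    have e : (fun i => ((a i + t * bseg r i : ℝ) : ℂ) + Complex.I * (ε : ℂ) * (u i : ℂ))
        = fun i => ((a i : ℂ) + Complex.I * (ε : ℂ) * (u i : ℂ)) + (t:ℂ) * (bseg r i : ℂ) := by
      funext i; push_cast; ring
    rw [e] at h
    exact h
  set R₀ : ℝ := max 1 ((‖a‖ + ‖u‖ + 1) * (2 / ηt)) with hR₀
  have hR₀pos : 0 < R₀ := lt_of_lt_of_le zero_lt_one (le_max_left _ _)
  have hF4 : ∀ ε r : ℝ, |ε| ≤ 1 → r ∈ Icc (0:ℝ) 1 → ∀ T : ℂ,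
      (Gp ε r).eval T = 0 → ‖T‖ ≤ R₀ := by
    intro ε r hε hr T hroot
    by_contra hT
    push_neg at hT
    have hT1 : (1:ℝ) < ‖T‖ := lt_of_le_of_lt (le_max_left _ _) hT
    have hTne : T ≠ 0 := by
      intro h; rw [h, norm_zero] at hT1; linarith
    set v : Fin d → ℂ := fun i => (a i : ℂ) + Complex.I * (ε : ℂ) * (u i : ℂ) with hv
    set w : Fin d → ℂ := fun i => (bseg r i : ℂ) + v i / T with hw
    have hTw : (fun i => v i + T * (bseg r i : ℂ)) = fun i => T * w i := by
      funext i
      rw [hw]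
      field_simp
      ring
    have hweval : aeval w p = 0 := by
      have h2 := maeval_scal hp T w
      rw [← hTw] at h2
      rw [hGeval] at hroot
      have h3 : (0:ℂ) = T ^ m * aeval w p := by rw [← h2]; exact hroot.symm
      rcases mul_eq_zero.mp h3.symm with h | h
      · exact absurd h (pow_ne_zero _ hTne)
      · exact h
    have hvnorm : ‖v‖ ≤ ‖a‖ + ‖u‖ := by
      have e : v = (fun i => (a i : ℂ)) + (Complex.I * (ε:ℂ)) • (fun i => (u i : ℂ)) := by
        funext i; simp [hv, smul_eq_mul]
      rw [e]
      calc ‖_ + _‖ ≤ ‖(fun i => (a i : ℂ))‖ + ‖(Complex.I * (ε:ℂ)) • (fun i => (u i : ℂ))‖ :=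
            norm_add_le _ _
        _ ≤ ‖a‖ + ‖u‖ := by
            rw [norm_coe, norm_smul, norm_coe]
            have : ‖Complex.I * (ε:ℂ)‖ ≤ 1 := by
              rw [norm_mul, Complex.norm_I, one_mul, Complex.norm_real, Real.norm_eq_abs]
              exact hε
            nlinarith [norm_nonneg u, norm_nonneg a]
    have hwdist : dist w (fun i => (u i : ℂ)) ≤ ηt := by
      have h1 : dist w (fun i => (bseg r i : ℂ)) ≤ ηt / 2 := by
        have e : w - (fun i => (bseg r i : ℂ)) = T⁻¹ • v := by
          funext i; simp [hw, smul_eq_mul]; ring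
        rw [dist_eq_norm, e, norm_smul, norm_inv]
        have hRbig : (‖a‖ + ‖u‖ + 1) * (2 / ηt) < ‖T‖ := lt_of_le_of_lt (le_max_right _ _) hT
        have hTpos : (0:ℝ) < ‖T‖ := by linarith [norm_nonneg T]
        rw [inv_mul_eq_div, div_le_iff₀ hTpos]
        have hkey : ηt / 2 * ((‖a‖ + ‖u‖ + 1) * (2 / ηt)) = ‖a‖ + ‖u‖ + 1 := by
          field_simp
        nlinarith [mul_lt_mul_of_pos_left hRbig (show (0:ℝ) < ηt/2 by positivity), hvnorm]
      have h2 : dist (fun i => (bseg r i : ℂ)) (fun i => (u i : ℂ)) ≤ ηt / 2 := by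
        rw [dist_coe]; exact hsegdist r hr
      calc dist w (fun i => (u i : ℂ)) ≤ _ + _ := dist_triangle w _ _
        _ ≤ ηt / 2 + ηt / 2 := add_le_add h1 h2
        _ = ηt := by ring
    exact hball w hwdist hweval
  have hF5 : ∀ ε r : ℝ, |ε| ≤ 1 → r ∈ Icc (0:ℝ) 1 → Gp ε r ≠ 0 := by
    intro ε r hε hr h0
    have h := hF4 ε r hε hr ((R₀ + 1 : ℝ) : ℂ) (by rw [h0]; simp)
    rw [Complex.norm_real, Real.norm_eq_abs, abs_of_pos (by linarith)] at h
    linarith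
  have jointCont : Continuous fun x : ℝ × ℝ × ℂ => (Gp x.1 x.2.1).eval x.2.2 := by
    have e : (fun x : ℝ × ℝ × ℂ => (Gp x.1 x.2.1).eval x.2.2)
        = (fun z : Fin d → ℂ => aeval z p) ∘ (fun x : ℝ × ℝ × ℂ => fun i =>
            ((a i : ℂ) + Complex.I * (x.1 : ℂ) * (u i : ℂ))
              + x.2.2 * ((bseg x.2.1 i : ℝ) : ℂ)) := by
      funext x
      exact hGeval x.1 x.2.1 x.2.2
    rw [e]
    refine (continuous_maeval p).comp (continuous_pi fun i => ?_)
    have h1 : Continuous fun x : ℝ × ℝ × ℂ => ((x.1 : ℝ) : ℂ) :=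
      Complex.continuous_ofReal.comp continuous_fst
    have h2 : Continuous fun x : ℝ × ℝ × ℂ => ((bseg x.2.1 i : ℝ) : ℂ) := by
      apply Complex.continuous_ofReal.comp
      have e2 : (fun x : ℝ × ℝ × ℂ => bseg x.2.1 i)
          = fun x : ℝ × ℝ × ℂ => u i + x.2.1 * (b i - u i) := rfl
      rw [e2]
      exact continuous_const.add ((continuous_fst.comp continuous_snd).mul continuous_const)
    exact (continuous_const.add ((continuous_const.mul h1).mul continuous_const)).add
      ((continuous_snd.comp continuous_snd).mul h2)
  have hUHP : ∀ T₀ : ℂ, 0 < T₀.im → ∀ ρ₀ : ℝ, 0 < ρ₀ → ρ₀ ≤ T₀.im / 2 →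
      closedBall T₀ ρ₀ ⊆ {T : ℂ | 0 < T.im} := by
    intro T₀ hT₀ ρ₀ hρ₀ hρle z hz
    rw [mem_closedBall, dist_eq_norm] at hz
    have h1 : |(z - T₀).im| ≤ ρ₀ :=
      (Complex.abs_im_le_norm _).trans hz
    rw [Complex.sub_im] at h1
    have h2 := abs_le.mp h1
    simp only [Set.mem_setOf_eq]
    linarith [h2.1]
  have pickRad : ∀ (g : Polynomial ℂ), g ≠ 0 → ∀ T₀ : ℂ, ∀ c0 : ℝ, 0 < c0 →
      ∃ ρ₀ : ℝ, 0 < ρ₀ ∧ ρ₀ ≤ c0 ∧ ∀ z ∈ sphere T₀ ρ₀, g.eval z ≠ 0 := by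
    intro g hg T₀ c0 hc0
    have hfin : Set.Finite ((fun z => dist z T₀) '' {z : ℂ | g.IsRoot z}) :=
      (Polynomial.finite_setOf_isRoot hg).image _
    obtain ⟨ρ₀, hρ₀⟩ := ((Set.Ioc_infinite hc0).diff hfin).nonempty
    refine ⟨ρ₀, hρ₀.1.1, hρ₀.1.2, ?_⟩
    intro z hz hzero
    exact hρ₀.2 ⟨z, hzero, by rwa [mem_sphere] at hz⟩
  have minSphere : ∀ (g : Polynomial ℂ) (T₀ : ℂ) (ρ₀ : ℝ), 0 < ρ₀ →
      (∀ z ∈ sphere T₀ ρ₀, g.eval z ≠ 0) →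
      ∃ ε₁ > 0, ∀ z ∈ sphere T₀ ρ₀, ε₁ ≤ ‖g.eval z‖ := by
    intro g T₀ ρ₀ hρ₀ hne
    obtain ⟨z₁, hz₁, hmin⟩ := (isCompact_sphere T₀ ρ₀).exists_isMinOn
      (NormedSpace.sphere_nonempty.mpr hρ₀.le)
      ((continuous_norm.comp (g.continuous)).continuousOn)
    exact ⟨‖g.eval z₁‖, norm_pos_iff.mpr (hne z₁ hz₁), fun z hz => hmin hz⟩
  have unifClose : ∀ (F : ℝ → Polynomial ℂ),
      (Continuous fun x : ℝ × ℂ => (F x.1).eval x.2) →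
      ∀ (T₀ : ℂ) (ρ₀ : ℝ) (ε₁ : ℝ), 0 < ε₁ →
      ∃ δ > 0, ∀ s t : ℝ, s ∈ Icc (0:ℝ) 1 → t ∈ Icc (0:ℝ) 1 → |s - t| < δ →
        ∀ z ∈ closedBall T₀ ρ₀, dist ((F s).eval z) ((F t).eval z) < ε₁ := by
    intro F hF T₀ ρ₀ ε₁ hε₁
    have hKcomp : IsCompact ((Icc (0:ℝ) 1) ×ˢ (closedBall T₀ ρ₀)) :=
      isCompact_Icc.prod (isCompact_closedBall _ _)
    have hUC := hKcomp.uniformContinuousOn_of_continuous hF.continuousOn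
    rw [Metric.uniformContinuousOn_iff] at hUC
    obtain ⟨δ, hδ, h⟩ := hUC ε₁ hε₁
    refine ⟨δ, hδ, fun s t hs ht hst z hz => ?_⟩
    refine h (s, z) ⟨hs, hz⟩ (t, z) ⟨ht, hz⟩ ?_
    rw [Prod.dist_eq]
    apply max_lt
    · rwa [Real.dist_eq]
    · simpa [dist_self] using hδ
  have claimA : ∀ ε : ℝ, 0 < ε → ε ≤ 1 → ∀ r ∈ Icc (0:ℝ) 1, ∀ T : ℂ, 0 < T.im →
      (Gp ε r).eval T ≠ 0 := by
    intro ε hε hε1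
    by_contra hcon
    push_neg at hcon
    obtain ⟨r₁, hr₁, T₁, hT₁, hroot₁⟩ := hcon
    set S : Set ℝ := {r | r ∈ Icc (0:ℝ) 1 ∧ ∃ T : ℂ, 0 < T.im ∧ (Gp ε r).eval T = 0}
      with hSdef
    have hSne : S.Nonempty := ⟨r₁, hr₁, T₁, hT₁, hroot₁⟩
    have hSbdd : BddBelow S := ⟨0, fun r hr => hr.1.1⟩
    have habs : |ε| ≤ 1 := abs_le.mpr ⟨by linarith, hε1⟩
    set r₀ := sInf S with hr₀def
    have hr₀Icc : r₀ ∈ Icc (0:ℝ) 1 :=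
      ⟨le_csInf hSne fun r hr => hr.1.1,
        (csInf_le hSbdd ⟨hr₁, T₁, hT₁, hroot₁⟩).trans hr₁.2⟩
    have hcont1 : Continuous fun x : ℝ × ℂ => (Gp ε x.1).eval x.2 := by
      have e : (fun x : ℝ × ℂ => (Gp ε x.1).eval x.2)
          = (fun y : ℝ × ℝ × ℂ => (Gp y.1 y.2.1).eval y.2.2)
              ∘ (fun x : ℝ × ℂ => (ε, x.1, x.2)) := rfl
      rw [e]
      exact jointCont.comp (by fun_prop)
    have hr₀S : r₀ ∈ S := by
      obtain ⟨xs, hanti, hxs_tend, hxs_mem⟩ := exists_seq_tendsto_sInf hSne hSbdd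
      choose Ts hTs using fun n => (hxs_mem n).2
      have hTs_bdd : ∀ n, Ts n ∈ closedBall (0:ℂ) R₀ := fun n =>
        mem_closedBall_zero_iff.mpr (hF4 ε (xs n) habs (hxs_mem n).1 _ (hTs n).2)
      obtain ⟨T₀, hT₀mem, φ, hφmono, hφtend⟩ :=
        tendsto_subseq_of_bounded isBounded_closedBall hTs_bdd
      have htuple : Tendsto (fun n => ((xs (φ n), Ts (φ n)) : ℝ × ℂ)) atTop (𝓝 (r₀, T₀)) :=
        (hxs_tend.comp hφmono.tendsto_atTop).prodMk_nhds hφtend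
      have hval : Tendsto (fun n => (Gp ε (xs (φ n))).eval (Ts (φ n))) atTop
          (𝓝 ((Gp ε r₀).eval T₀)) := (hcont1.tendsto _).comp htuple
      have hzero : (Gp ε r₀).eval T₀ = 0 := by
        have hval0 : Tendsto (fun _ : ℕ => (0:ℂ)) atTop (𝓝 ((Gp ε r₀).eval T₀)) :=
          hval.congr fun n => (hTs (φ n)).2
        exact tendsto_nhds_unique hval0 tendsto_const_nhds
      have him0 : 0 ≤ T₀.im := by
        have h1 : Tendsto (fun n => (Ts (φ n)).im) atTop (𝓝 T₀.im) :=
          (Complex.continuous_im.tendsto _).comp hφtend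
        exact ge_of_tendsto' h1 fun n => (hTs (φ n)).1.le
      have him : 0 < T₀.im := by
        rcases him0.lt_or_eq with h | h
        · exact h
        · exfalso
          have hTreal : ((T₀.re : ℝ) : ℂ) = T₀ := Complex.ext (by simp) (by simp [← h])
          exact hF3 ε hε.ne' r₀ T₀.re (by rw [hTreal]; exact hzero)
      exact ⟨hr₀Icc, T₀, him, hzero⟩
    obtain ⟨-, T₀, hT₀im, hT₀root⟩ := hr₀S
    have hr₀pos : 0 < r₀ := by
      rcases (hr₀Icc.1).lt_or_eq with h | h
      · exact h
      · exfalso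
        have hroot' := hT₀root
        rw [← h] at hroot'
        rw [hGeval] at hroot'
        have hc' : ε + T₀.im ≠ 0 := ne_of_gt (by linarith)
        have h2 := step0 p hp u hyp hc' (fun i => a i + T₀.re * u i)
        have e : (fun i => ((a i + T₀.re * u i : ℝ) : ℂ)
              + Complex.I * ((ε + T₀.im : ℝ) : ℂ) * (u i : ℂ))
            = fun i => ((a i : ℂ) + Complex.I * (ε : ℂ) * (u i : ℂ))
              + T₀ * ((bseg 0 i : ℝ) : ℂ) := by
          funext i
          have hb0 : bseg 0 i = u i := by simp [hbseg]
          rw [hb0]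
          push_cast
          linear_combination (u i : ℂ) * (Complex.re_add_im T₀)
        rw [e] at h2
        exact h2 hroot'
    obtain ⟨ρ₀, hρ₀pos, hρ₀le, hρ₀ne⟩ :=
      pickRad (Gp ε r₀) (hF5 ε r₀ habs hr₀Icc) T₀ (T₀.im / 2) (by linarith)
    obtain ⟨ε₁, hε₁pos, hε₁min⟩ := minSphere (Gp ε r₀) T₀ ρ₀ hρ₀pos hρ₀ne
    obtain ⟨δ, hδpos, hδ⟩ := unifClose (fun r => Gp ε r) hcont1 T₀ ρ₀ (ε₁/2) (by positivity)
    set r₂ := max 0 (r₀ - δ/2) with hr₂def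
    have hr₂Icc : r₂ ∈ Icc (0:ℝ) 1 :=
      ⟨le_max_left _ _, max_le zero_le_one (by linarith [hr₀Icc.2])⟩
    have hr₂lt : r₂ < r₀ := max_lt hr₀pos (by linarith)
    have hr₂close : |r₂ - r₀| < δ := by
      rw [abs_lt]
      have h1 : r₀ - δ/2 ≤ r₂ := le_max_right _ _
      constructor <;> linarith
    have hr₂S : r₂ ∈ S := by
      refine ⟨hr₂Icc, ?_⟩
      by_contra hno
      push_neg at hno
      have hzf : ∀ z ∈ closedBall T₀ ρ₀, (Gp ε r₂).eval z ≠ 0 := fun z hz =>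
        hno z (hUHP T₀ hT₀im ρ₀ hρ₀pos hρ₀le hz)
      have hclose : ∀ z ∈ closedBall T₀ ρ₀,
          dist ((Gp ε r₂).eval z) ((Gp ε r₀).eval z) < ε₁/2 :=
        fun z hz => hδ r₂ r₀ hr₂Icc hr₀Icc hr₂close z hz
      have hsb : ∀ z ∈ sphere T₀ ρ₀, ε₁/2 ≤ ‖(Gp ε r₂).eval z‖ := by
        intro z hz
        have h1 := hε₁min z hz
        have h2 := (hclose z (sphere_subset_closedBall hz)).le
        have h3 : ‖(Gp ε r₀).eval z‖ - ‖(Gp ε r₂).eval z‖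
            ≤ dist ((Gp ε r₂).eval z) ((Gp ε r₀).eval z) := by
          rw [dist_eq_norm, norm_sub_rev]
          exact norm_sub_norm_le _ _
        linarith
      have hmin2 := minmod (Polynomial.differentiable _) hρ₀pos hzf
        (show (0:ℝ) < ε₁/2 by positivity) hsb
      have hcenter := hclose T₀ (mem_closedBall_self hρ₀pos.le)
      rw [hT₀root, dist_zero_right] at hcenter
      linarith
    exact absurd (csInf_le hSbdd hr₂S) (not_le.mpr hr₂lt)
  have claimB : ∀ T : ℂ, 0 < T.im → (Gp 0 1).eval T ≠ 0 := by
    intro T₀ hT₀im hT₀root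
    have h01 : (0:ℝ) ∈ Icc (0:ℝ) 1 := ⟨le_refl 0, zero_le_one⟩
    have h11 : (1:ℝ) ∈ Icc (0:ℝ) 1 := ⟨zero_le_one, le_refl 1⟩
    obtain ⟨ρ₀, hρ₀pos, hρ₀le, hρ₀ne⟩ :=
      pickRad (Gp 0 1) (hF5 0 1 (by simp) h11) T₀ (T₀.im/2) (by linarith)
    obtain ⟨ε₁, hε₁pos, hε₁min⟩ := minSphere (Gp 0 1) T₀ ρ₀ hρ₀pos hρ₀ne
    have hcont1 : Continuous fun x : ℝ × ℂ => (Gp x.1 1).eval x.2 := by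
      have e : (fun x : ℝ × ℂ => (Gp x.1 1).eval x.2)
          = (fun y : ℝ × ℝ × ℂ => (Gp y.1 y.2.1).eval y.2.2)
              ∘ (fun x : ℝ × ℂ => (x.1, 1, x.2)) := rfl
      rw [e]
      exact jointCont.comp (by fun_prop)
    obtain ⟨δ, hδpos, hδ⟩ := unifClose (fun s => Gp s 1) hcont1 T₀ ρ₀ (ε₁/2) (by positivity)
    set ε' := min (δ/2) (1:ℝ) with hε'def
    have hε'pos : 0 < ε' := lt_min (by positivity) zero_lt_one
    have hε'le : ε' ≤ 1 := min_le_right _ _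
    have hε'Icc : ε' ∈ Icc (0:ℝ) 1 := ⟨hε'pos.le, hε'le⟩
    have hε'close : |ε' - 0| < δ := by
      rw [sub_zero, abs_of_pos hε'pos]
      calc ε' ≤ δ/2 := min_le_left _ _
        _ < δ := by linarith
    have hzf : ∀ z ∈ closedBall T₀ ρ₀, (Gp ε' 1).eval z ≠ 0 := fun z hz =>
      claimA ε' hε'pos hε'le 1 h11 z (hUHP T₀ hT₀im ρ₀ hρ₀pos hρ₀le hz)
    have hclose : ∀ z ∈ closedBall T₀ ρ₀,
        dist ((Gp ε' 1).eval z) ((Gp 0 1).eval z) < ε₁/2 :=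
      fun z hz => hδ ε' 0 hε'Icc h01 hε'close z hz
    have hsb : ∀ z ∈ sphere T₀ ρ₀, ε₁/2 ≤ ‖(Gp ε' 1).eval z‖ := by
      intro z hz
      have h1 := hε₁min z hz
      have h2 := (hclose z (sphere_subset_closedBall hz)).le
      have h3 : ‖(Gp 0 1).eval z‖ - ‖(Gp ε' 1).eval z‖
          ≤ dist ((Gp ε' 1).eval z) ((Gp 0 1).eval z) := by
        rw [dist_eq_norm, norm_sub_rev]
        exact norm_sub_norm_le _ _
      linarith
    have hmin2 := minmod (Polynomial.differentiable _) hρ₀pos hzf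
      (show (0:ℝ) < ε₁/2 by positivity) hsb
    have hcenter := hclose T₀ (mem_closedBall_self hρ₀pos.le)
    rw [hT₀root, dist_zero_right] at hcenter
    linarith
  intro c hc
  have hGb : ∀ T : ℂ, (Gp 0 1).eval T = aeval (fun i => (a i : ℂ) + T * (b i : ℂ)) p := by
    intro T
    rw [hGeval]
    have e : (fun i => ((a i : ℂ) + Complex.I * ((0:ℝ) : ℂ) * (u i : ℂ))
          + T * ((bseg 1 i : ℝ) : ℂ))
        = fun i => (a i : ℂ) + T * (b i : ℂ) := by
      funext i
      have h1 : bseg 1 i = b i := by simp [hbseg]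
      rw [h1]
      push_cast
      ring
    rw [e]
  have hmain : ∀ T : ℂ, 0 < T.im → aeval (fun i => (a i : ℂ) + T * (b i : ℂ)) p ≠ 0 := by
    intro T hT
    rw [← hGb]
    exact claimB T hT
  rcases hc.lt_or_gt with hneg | hpos
  · intro hzero
    have him : 0 < (Complex.I * ((-c : ℝ) : ℂ)).im := by
      simp only [Complex.mul_im, Complex.I_re, Complex.I_im, Complex.ofReal_re,
        Complex.ofReal_im]
      simpa using (by linarith : (0:ℝ) < -c)
    have h := hmain (Complex.I * ((-c : ℝ) : ℂ)) him
    apply h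
    have hconj := maeval_conj p (fun i => (a i : ℂ) + Complex.I * (c : ℂ) * (b i : ℂ))
    rw [hzero, map_zero] at hconj
    have e : (fun i => (starRingEnd ℂ) ((a i : ℂ) + Complex.I * (c : ℂ) * (b i : ℂ)))
        = fun i => (a i : ℂ) + (Complex.I * ((-c : ℝ) : ℂ)) * (b i : ℂ) := by
      funext i
      simp only [map_add, map_mul, Complex.conj_ofReal, Complex.conj_I]
      push_cast
      ring
    rw [e] at hconj
    exact hconj.symm
  · have him : 0 < (Complex.I * ((c : ℝ) : ℂ)).im := by
      simp only [Complex.mul_im, Complex.I_re, Complex.I_im, Complex.ofReal_re,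
        Complex.ofReal_im]
      simpa using hpos
    have h := hmain (Complex.I * ((c : ℝ) : ℂ)) him
    have e : (fun i => (a i : ℂ) + (Complex.I * ((c : ℝ) : ℂ)) * (b i : ℂ))
        = fun i => (a i : ℂ) + Complex.I * (c : ℂ) * (b i : ℂ) := by
      funext i
      ring
    rw [e] at h
    exact h


lemma aeval_real_eq_eval (f : Fin d → ℝ) (p : MvPolynomial (Fin d) ℝ) :
    (aeval f p : ℝ) = eval f p := by
  rw [← MvPolynomial.coe_aeval_eq_eval]; rfl

lemma expansion_complex (p : MvPolynomial (Fin d) ℝ) (m : ℕ) (x : Fin d → ℝ)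
    (q : ℕ → MvPolynomial (Fin d) ℝ)
    (hexp : ∀ y : Fin d → ℝ, eval (fun i => x i + y i) p
      = ∑ j ∈ Finset.range (m + 1), eval y (q j)) :
    ∀ z : Fin d → ℂ, aeval (fun i => (x i : ℂ) + z i) p
      = ∑ j ∈ Finset.range (m + 1), aeval z (q j) := by
  have hid : (aeval (fun i => X i + C (x i)) p : MvPolynomial (Fin d) ℝ)
      = ∑ j ∈ Finset.range (m + 1), q j := by
    apply MvPolynomial.funext
    intro y
    have h1 : eval y (aeval (fun i => X i + C (x i)) p) = eval (fun i => x i + y i) p := by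
      rw [← aeval_real_eq_eval]
      have h := comp_aeval_apply (R := ℝ)
        (aeval y : MvPolynomial (Fin d) ℝ →ₐ[ℝ] ℝ) p (f := fun i => X i + C (x i))
      rw [h]
      rw [aeval_real_eq_eval]
      have e : (fun i => aeval y ((X i : MvPolynomial (Fin d) ℝ) + C (x i)))
          = fun i => y i + x i := by
        funext i; simp
      rw [e]
      have e2 : (fun i => y i + x i) = fun i => x i + y i := by
        funext i; ring
      rw [e2]
    rw [h1, hexp y, map_sum]
  intro z
  have h2 : aeval z (aeval (fun i => X i + C (x i)) p)
      = aeval z (∑ j ∈ Finset.range (m + 1), q j) := by rw [hid]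
  rw [map_sum] at h2
  have h3 := comp_aeval_apply (R := ℝ)
    (aeval z : MvPolynomial (Fin d) ℝ →ₐ[ℝ] ℂ) p (f := fun i => X i + C (x i))
  rw [h3] at h2
  have e : (fun i => aeval z ((X i : MvPolynomial (Fin d) ℝ) + C (x i)))
      = fun i => (x i : ℂ) + z i := by
    funext i
    simp
    ring
  rw [e] at h2
  exact h2

lemma pickRad' (g : Polynomial ℂ) (hg : g ≠ 0) (T₀ : ℂ) (c0 : ℝ) (hc0 : 0 < c0) :
    ∃ ρ₀ : ℝ, 0 < ρ₀ ∧ ρ₀ ≤ c0 ∧ ∀ z ∈ sphere T₀ ρ₀, g.eval z ≠ 0 := by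
  have hfin : Set.Finite ((fun z => dist z T₀) '' {z : ℂ | g.IsRoot z}) :=
    (Polynomial.finite_setOf_isRoot hg).image _
  obtain ⟨ρ₀, hρ₀⟩ := ((Set.Ioc_infinite hc0).diff hfin).nonempty
  refine ⟨ρ₀, hρ₀.1.1, hρ₀.1.2, ?_⟩
  intro z hz hzero
  exact hρ₀.2 ⟨z, hzero, by rwa [mem_sphere] at hz⟩

lemma minSphere' (g : Polynomial ℂ) (T₀ : ℂ) (ρ₀ : ℝ) (hρ₀ : 0 < ρ₀)
    (hne : ∀ z ∈ sphere T₀ ρ₀, g.eval z ≠ 0) :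
    ∃ ε₁ > 0, ∀ z ∈ sphere T₀ ρ₀, ε₁ ≤ ‖g.eval z‖ := by
  obtain ⟨z₁, hz₁, hmin⟩ := (isCompact_sphere T₀ ρ₀).exists_isMinOn
    (NormedSpace.sphere_nonempty.mpr hρ₀.le)
    ((continuous_norm.comp g.continuous).continuousOn)
  exact ⟨‖g.eval z₁‖, norm_pos_iff.mpr (hne z₁ hz₁), fun z hz => hmin hz⟩

end Stmt4Aux

open Complex MvPolynomial Metric Set Finset Filter Topology in
set_option maxHeartbeats 1600000 in
/-- **Proposition (hyperbolicity of the localization).**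
Let `p` be a nonzero real homogeneous polynomial of degree `m`, hyperbolic in direction
`u`, and fix `x` with `p(x) = 0`.  Write `p(x + y) = ∑_{j} q_j(y)` where each `q_j` is
homogeneous of degree `j`, and let `q_k` be the lowest nonvanishing homogeneous
component (the localization of `p` at `x`).  Then `q_k` is hyperbolic in direction `u`. -/
theorem stmt4 (d m k : ℕ) (p : MvPolynomial (Fin d) ℝ) (hp0 : p ≠ 0)
    (hp : p.IsHomogeneous m) (u : Fin d → ℝ)
    (hyp : ∀ y : Fin d → ℝ,
      MvPolynomial.aeval (fun j => (u j : ℂ) + Complex.I * (y j : ℂ)) p ≠ 0)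
    (x : Fin d → ℝ) (hx : MvPolynomial.eval x p = 0)
    (q : ℕ → MvPolynomial (Fin d) ℝ)
    (hq : ∀ j, (q j).IsHomogeneous j)
    (hexp : ∀ y : Fin d → ℝ,
      MvPolynomial.eval (fun i => x i + y i) p =
        ∑ j ∈ Finset.range (m + 1), MvPolynomial.eval y (q j))
    (hk : q k ≠ 0) (hlow : ∀ j, j < k → q j = 0) :
    ∀ y : Fin d → ℝ,
      MvPolynomial.aeval (fun j => (u j : ℂ) + Complex.I * (y j : ℂ)) (q k) ≠ 0 := by
  intro y
  by_cases hkm' : m + 1 ≤ k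
  · exfalso
    apply hp0
    apply MvPolynomial.funext (q := 0)
    intro w
    rw [map_zero]
    have h := hexp (fun i => w i - x i)
    have e : (fun i => x i + (w i - x i)) = w := by funext i; ring
    rw [e] at h
    rw [h]
    refine Finset.sum_eq_zero fun j hj => ?_
    rw [hlow j (lt_of_lt_of_le (Finset.mem_range.mp hj) hkm')]
    rw [map_zero]
  push_neg at hkm'
  obtain ⟨η, hη, hball⟩ := Stmt4Aux.ballHyp p hp u hyp
  obtain ⟨v, hv⟩ : ∃ v : Fin d → ℝ, eval v (q k) ≠ 0 := by
    by_contra h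
    push_neg at h
    exact hk (MvPolynomial.funext fun w => by rw [h w, map_zero])
  have hexpC := Stmt4Aux.expansion_complex p m x q hexp
  set zmap : ℂ → Fin d → ℂ :=
    fun ζ i => ((u i : ℂ) + Complex.I * (y i : ℂ)) + ζ * (Complex.I * (v i : ℂ)) with hzmap
  set Ap : ℕ → Polynomial ℂ := fun j =>
    aeval (fun i => Polynomial.C ((u i : ℂ) + Complex.I * (y i : ℂ))
      + Polynomial.X * Polynomial.C (Complex.I * (v i : ℂ))) (q j) with hAp
  have hApeval : ∀ (j : ℕ) (ζ : ℂ), (Ap j).eval ζ = aeval (zmap ζ) (q j) := fun j ζ =>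
    Stmt4Aux.mv_to_poly_eval (q j) _ _ ζ
  have hgoal_eq : (Ap k).eval 0
      = aeval (fun j => (u j : ℂ) + Complex.I * (y j : ℂ)) (q k) := by
    rw [hApeval]
    have e : zmap 0 = fun j => (u j : ℂ) + Complex.I * (y j : ℂ) := by
      funext i
      simp [hzmap]
    rw [e]
  rw [← hgoal_eq]
  intro hzero
  have hAkne : Ap k ≠ 0 := by
    intro hzero2
    have harg : Tendsto (fun R : ℝ => fun i =>
        ((u i : ℂ) + Complex.I * (y i : ℂ)) * ((R : ℂ))⁻¹ + Complex.I * (v i : ℂ)) atTop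
        (𝓝 (fun i => Complex.I * (v i : ℂ))) := by
      rw [tendsto_pi_nhds]
      intro i
      have h1 : Tendsto (fun R : ℝ => ((R : ℂ))⁻¹) atTop (𝓝 0) := by
        have h2 : Tendsto (fun R : ℝ => ((R⁻¹ : ℝ) : ℂ)) atTop (𝓝 ((0 : ℝ) : ℂ)) :=
          (Complex.continuous_ofReal.tendsto _).comp tendsto_inv_atTop_zero
        simpa [Complex.ofReal_inv] using h2
      have h3 := ((tendsto_const_nhds
        (x := (u i : ℂ) + Complex.I * (y i : ℂ)) (f := atTop)).mul h1).add
        (tendsto_const_nhds (x := Complex.I * (v i : ℂ)) (f := atTop))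
      simpa using h3
    have hlim := ((Stmt4Aux.continuous_maeval (q k)).tendsto _).comp harg
    have hlimne : aeval (fun i => Complex.I * (v i : ℂ)) (q k) ≠ 0 := by
      rw [Stmt4Aux.maeval_scal (hq k), Stmt4Aux.maeval_ofReal]
      exact mul_ne_zero (pow_ne_zero _ Complex.I_ne_zero)
        (by exact_mod_cast hv)
    obtain ⟨R, hRne, hR1⟩ := ((hlim.eventually_ne hlimne).and (eventually_ge_atTop (1:ℝ))).exists
    have hRpos : (0:ℝ) < R := by linarith
    have hR0 : (R : ℂ) ≠ 0 := by exact_mod_cast hRpos.ne'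
    have hzm : zmap (R : ℂ) = fun i =>
        (R : ℂ) * (((u i : ℂ) + Complex.I * (y i : ℂ)) * ((R : ℂ))⁻¹
          + Complex.I * (v i : ℂ)) := by
      funext i
      simp only [hzmap]
      field_simp
    have hval := hApeval k (R : ℂ)
    rw [hzero2, Polynomial.eval_zero] at hval
    rw [hzm, Stmt4Aux.maeval_scal (hq k)] at hval
    rcases mul_eq_zero.mp hval.symm with h | h
    · exact pow_ne_zero _ hR0 h
    · exact hRne h
  set B : ℝ := min 1 (η / (‖v‖ + 1)) with hB
  have hBpos : 0 < B := lt_min zero_lt_one (by positivity)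
  obtain ⟨r, hrpos, hrB, hrne⟩ := Stmt4Aux.pickRad' (Ap k) hAkne 0 B hBpos
  obtain ⟨ε₁, hε₁pos, hε₁min⟩ := Stmt4Aux.minSphere' (Ap k) 0 r hrpos hrne
  have hCj : ∀ j : ℕ, ∃ C : ℝ, ∀ ζ ∈ closedBall (0:ℂ) r, ‖(Ap j).eval ζ‖ ≤ C := fun j =>
    (isCompact_closedBall (0:ℂ) r).exists_bound_of_continuousOn
      ((Ap j).continuous.continuousOn)
  choose Cf hCf using hCj
  set M : ℝ := ∑ j ∈ Finset.range (m+1), |Cf j| with hM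
  have hM0 : 0 ≤ M := Finset.sum_nonneg fun j _ => abs_nonneg _
  have hMb : ∀ j ∈ Finset.range (m+1), ∀ ζ ∈ closedBall (0:ℂ) r, ‖(Ap j).eval ζ‖ ≤ M := by
    intro j hj ζ hζ
    calc ‖(Ap j).eval ζ‖ ≤ Cf j := hCf j ζ hζ
      _ ≤ |Cf j| := le_abs_self _
      _ ≤ M := Finset.single_le_sum (f := fun j => |Cf j|) (fun j _ => abs_nonneg _) hj
  set σ : ℝ := min 1 (ε₁ / (2 * (M * (m+1) + 1))) with hσdef
  have hσpos : 0 < σ := lt_min zero_lt_one (by positivity)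
  have hσ1 : σ ≤ 1 := min_le_left _ _
  set Fp : Polynomial ℂ :=
    ∑ j ∈ Finset.range (m+1), Polynomial.C ((Complex.I * (σ:ℂ))^(j-k)) * Ap j with hFp
  have hFpeval0 : ∀ ζ : ℂ, Fp.eval ζ
      = ∑ j ∈ Finset.range (m+1), (Complex.I * (σ:ℂ))^(j-k) * (Ap j).eval ζ := by
    intro ζ
    rw [hFp, Polynomial.eval_finset_sum]
    exact Finset.sum_congr rfl fun j hj => by rw [Polynomial.eval_mul, Polynomial.eval_C]
  have hident : ∀ ζ : ℂ,
      aeval (fun i => (x i : ℂ) + (Complex.I * (σ:ℂ)) * zmap ζ i) p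
        = (Complex.I * (σ:ℂ))^k * Fp.eval ζ := by
    intro ζ
    have h1 := hexpC (fun i => (Complex.I * (σ:ℂ)) * zmap ζ i)
    rw [h1, hFpeval0 ζ, Finset.mul_sum]
    refine Finset.sum_congr rfl fun j hj => ?_
    rw [hApeval j ζ, Stmt4Aux.maeval_scal (hq j)]
    by_cases hjk : k ≤ j
    · rw [← mul_assoc, ← pow_add, Nat.add_sub_cancel' hjk]
    · push_neg at hjk
      rw [hlow j hjk]
      simp
  have hzf : ∀ ζ ∈ closedBall (0:ℂ) r, Fp.eval ζ ≠ 0 := by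
    intro ζ hζ h0
    have hnormζ : ‖ζ‖ ≤ B := le_trans (mem_closedBall_zero_iff.mp hζ) hrB
    have him : |ζ.im| ≤ B :=
      le_trans (Complex.abs_im_le_norm ζ) hnormζ
    have hbdist : ‖(fun i => u i - ζ.im * v i) - u‖ ≤ η := by
      have e : (fun i => u i - ζ.im * v i) - u = (-ζ.im) • v := by
        funext i
        simp [smul_eq_mul]
        try ring
      rw [e, norm_smul, Real.norm_eq_abs, abs_neg]
      have h1 : B ≤ η / (‖v‖ + 1) := min_le_right _ _
      have hvle : B * (‖v‖ + 1) ≤ η := (le_div_iff₀ (by positivity)).mp h1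
      calc |ζ.im| * ‖v‖ ≤ B * (‖v‖ + 1) := by
            nlinarith [norm_nonneg v, abs_nonneg ζ.im]
        _ ≤ η := hvle
    have hne := hball (fun i => u i - ζ.im * v i) hbdist
      (fun i => x i - σ * y i - σ * ζ.re * v i) σ hσpos.ne'
    have e2 : (fun i => ((x i - σ * y i - σ * ζ.re * v i : ℝ) : ℂ)
          + Complex.I * (σ:ℂ) * ((u i - ζ.im * v i : ℝ) : ℂ))
        = fun i => (x i : ℂ) + (Complex.I * (σ:ℂ)) * zmap ζ i := by
      funext i
      simp only [hzmap]
      push_cast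
      linear_combination (-(σ:ℂ) * (y i : ℂ) - (σ:ℂ) * (v i : ℂ) * ζ) * Complex.I_sq
        + (-(σ:ℂ) * (v i : ℂ)) * (Complex.re_add_im ζ)
    rw [e2] at hne
    apply hne
    rw [hident ζ, h0, mul_zero]
  have hApzero : ∀ j, j < k → Ap j = 0 := by
    intro j hj
    rw [hAp]
    simp only []
    rw [hlow j hj, map_zero]
  have htail : ∀ ζ ∈ closedBall (0:ℂ) r, dist (Fp.eval ζ) ((Ap k).eval ζ) < ε₁ / 2 := by
    intro ζ hζ
    rw [dist_eq_norm]
    have hkmem : k ∈ Finset.range (m+1) := Finset.mem_range.mpr hkm'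
    have hksub : Fp.eval ζ - (Ap k).eval ζ
        = ∑ j ∈ Finset.range (m+1) \ {k}, (Complex.I*(σ:ℂ))^(j-k) * (Ap j).eval ζ := by
      rw [hFpeval0 ζ]
      rw [Finset.sum_eq_sum_sdiff_singleton_add hkmem
        (fun j => (Complex.I*(σ:ℂ))^(j-k) * (Ap j).eval ζ)]
      rw [Nat.sub_self, pow_zero, one_mul]
      ring
    rw [hksub]
    have hbound : ∀ j ∈ Finset.range (m+1) \ {k},
        ‖(Complex.I*(σ:ℂ))^(j-k) * (Ap j).eval ζ‖ ≤ σ * M := by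
      intro j hj
      obtain ⟨hjr, hjne⟩ := Finset.mem_sdiff.mp hj
      rcases lt_or_gt_of_ne (fun h => (Finset.mem_singleton.mpr h : j ∈ ({k} : Finset ℕ)) |> hjne) with hlt | hgt
      · rw [hApzero j hlt, Polynomial.eval_zero, mul_zero, norm_zero]
        positivity
      · rw [norm_mul, norm_pow, norm_mul, Complex.norm_I, one_mul, Complex.norm_real,
          Real.norm_eq_abs, abs_of_pos hσpos]
        have h1 : σ^(j-k) ≤ σ := by
          calc σ^(j-k) ≤ σ^1 := pow_le_pow_of_le_one hσpos.le hσ1 (by omega)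
            _ = σ := pow_one σ
        have h2 : ‖(Ap j).eval ζ‖ ≤ M := hMb j hjr ζ hζ
        have h3 : (0:ℝ) ≤ σ^(j-k) := by positivity
        nlinarith [norm_nonneg ((Ap j).eval ζ)]
    calc ‖∑ j ∈ Finset.range (m+1) \ {k}, (Complex.I*(σ:ℂ))^(j-k) * (Ap j).eval ζ‖
        ≤ ∑ j ∈ Finset.range (m+1) \ {k}, ‖(Complex.I*(σ:ℂ))^(j-k) * (Ap j).eval ζ‖ :=
          norm_sum_le _ _
      _ ≤ ∑ _j ∈ Finset.range (m+1) \ {k}, σ * M := Finset.sum_le_sum hbound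
      _ = (Finset.range (m+1) \ {k}).card * (σ * M) := by
          rw [Finset.sum_const, nsmul_eq_mul]
      _ ≤ (m+1) * (σ * M) := by
          have hcard : ((Finset.range (m+1) \ {k}).card : ℝ) ≤ (m+1 : ℝ) := by
            have := Finset.card_le_card (Finset.sdiff_subset (s := Finset.range (m+1)) (t := {k}))
            rw [Finset.card_range] at this
            exact_mod_cast this
          nlinarith [hM0, hσpos.le, mul_nonneg hσpos.le hM0]
      _ < ε₁ / 2 := by
          have hσle : σ ≤ ε₁ / (2 * (M * (m+1) + 1)) := min_le_right _ _
          have hpos : (0:ℝ) < 2 * (M * (m+1) + 1) := by positivity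
          rw [le_div_iff₀ hpos] at hσle
          have hm1 : (0:ℝ) ≤ (m:ℝ) + 1 := by positivity
          nlinarith [hσpos, hM0]
  have hsb : ∀ ζ ∈ sphere (0:ℂ) r, ε₁/2 ≤ ‖Fp.eval ζ‖ := by
    intro z hz
    have h1 := hε₁min z hz
    have h2 := (htail z (sphere_subset_closedBall hz)).le
    have h3 : ‖(Ap k).eval z‖ - ‖Fp.eval z‖ ≤ dist (Fp.eval z) ((Ap k).eval z) := by
      rw [dist_eq_norm, norm_sub_rev]
      exact norm_sub_norm_le _ _
    linarith
  have hmin2 := Stmt4Aux.minmod (Polynomial.differentiable Fp) hrpos hzf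
    (show (0:ℝ) < ε₁/2 by positivity) hsb
  have hcenter := htail 0 (mem_closedBall_self hrpos.le)
  rw [hzero, dist_zero_right] at hcenter
  linarith
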